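/- arXiv:math/0403523 — 4 statements merged into one kernel-verified Lean document; each statement's English description precedes it below -/
import Mathlib

section
/- Let ℓ ≥ 2, λ ∈ (0,1), and τ : ℝ/ℤ → ℝ Lipschitz with constant L. Then the functions ρ⁺(θ) = sup{ t_λ(θ̄) : θ̄ ∈ S, θ₀ = θ } and ρ⁻(θ) = inf{ t_λ(θ̄) : θ̄ ∈ S, θ₀ = θ } are Lipschitz on ℝ/ℤ with constant L/(ℓ - λ). -/
/-- The upper boundary function `ρ⁺` of the attractor: the sup of `t_λ` over all
backward orbits starting at `θ`. -/
noncomputable def upperB (ℓ : ℕ) (lam : ℝ) (τ : UnitAddCircle → ℝ) (θ : UnitAddCircle) : ℝ :=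
  sSup {x : ℝ | ∃ u : ℕ → UnitAddCircle, (∀ k, (ℓ : ℤ) • u (k + 1) = u k) ∧ u 0 = θ ∧
    x = ∑' k : ℕ, lam ^ k * τ (u (k + 1))}

/-- The lower boundary function `ρ⁻` of the attractor. -/
noncomputable def lowerB (ℓ : ℕ) (lam : ℝ) (τ : UnitAddCircle → ℝ) (θ : UnitAddCircle) : ℝ :=
  sInf {x : ℝ | ∃ u : ℕ → UnitAddCircle, (∀ k, (ℓ : ℤ) • u (k + 1) = u k) ∧ u 0 = θ ∧
    x = ∑' k : ℕ, lam ^ k * τ (u (k + 1))}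



lemma exists_rep (c : UnitAddCircle) : ∃ x : ℝ, (x : UnitAddCircle) = c ∧ |x| = ‖c‖ := by
  obtain ⟨r, rfl⟩ := QuotientAddGroup.mk_surjective c
  refine ⟨r - round r, ?_, ?_⟩
  · have h0 : ((round r : ℝ) : UnitAddCircle) = 0 := by
      rw [QuotientAddGroup.eq_zero_iff]
      exact ⟨round r, by simp⟩
    have : ((r - round r : ℝ) : UnitAddCircle) = (r : UnitAddCircle) - ((round r : ℝ) : UnitAddCircle) := rfl
    rw [this, h0, sub_zero]
  · rw [UnitAddCircle.norm_eq]

lemma step (ℓ : ℕ) (hℓ : 2 ≤ ℓ) (b a' : UnitAddCircle) :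
    ∃ b' : UnitAddCircle, (ℓ : ℤ) • b' = a' ∧ dist b b' ≤ dist ((ℓ : ℤ) • b) a' / ℓ := by
  have hℓ0 : (ℓ : ℝ) ≠ 0 := by positivity
  obtain ⟨x, hx, hxn⟩ := exists_rep (a' - (ℓ : ℤ) • b)
  refine ⟨b + ((x / ℓ : ℝ) : UnitAddCircle), ?_, ?_⟩
  · have h1 : (ℓ : ℤ) • ((x / ℓ : ℝ) : UnitAddCircle) = ((x : ℝ) : UnitAddCircle) := by
      rw [← AddCircle.coe_zsmul]
      congr 1
      simp only [zsmul_eq_mul, Int.cast_natCast]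
      field_simp
    rw [smul_add, h1, hx]
    abel
  · have h2 : dist b (b + ((x / ℓ : ℝ) : UnitAddCircle)) = ‖((x / ℓ : ℝ) : UnitAddCircle)‖ := by
      rw [dist_eq_norm]
      simp
    rw [h2]
    calc ‖((x / ℓ : ℝ) : UnitAddCircle)‖ ≤ |x / ℓ| := by
          rw [UnitAddCircle.norm_eq]; simpa using round_le (x / ℓ) 0
      _ = |x| / ℓ := by rw [abs_div, abs_of_nonneg (by positivity : (0:ℝ) ≤ (ℓ:ℝ))]
      _ = dist ((ℓ : ℤ) • b) a' / ℓ := by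
          rw [hxn, dist_eq_norm, ← norm_neg, neg_sub]

/-- A backward orbit starting from `θ`. -/
noncomputable def orbitFrom (ℓ : ℕ) (hℓ : 2 ≤ ℓ) (θ : UnitAddCircle) : ℕ → UnitAddCircle
  | 0 => θ
  | k + 1 => (step ℓ hℓ 0 (orbitFrom ℓ hℓ θ k)).choose

lemma orbitFrom_spec (ℓ : ℕ) (hℓ : 2 ≤ ℓ) (θ : UnitAddCircle) :
    (∀ k, (ℓ : ℤ) • orbitFrom ℓ hℓ θ (k + 1) = orbitFrom ℓ hℓ θ k) ∧ orbitFrom ℓ hℓ θ 0 = θ :=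
  ⟨fun k => (step ℓ hℓ 0 (orbitFrom ℓ hℓ θ k)).choose_spec.1, rfl⟩

/-- A shadow orbit of `u` starting from `θ'`. -/
noncomputable def shadow (ℓ : ℕ) (hℓ : 2 ≤ ℓ) (u : ℕ → UnitAddCircle) (θ' : UnitAddCircle) :
    ℕ → UnitAddCircle
  | 0 => θ'
  | k + 1 => (step ℓ hℓ (u (k + 1)) (shadow ℓ hℓ u θ' k)).choose

lemma shadow_spec (ℓ : ℕ) (hℓ : 2 ≤ ℓ) (u : ℕ → UnitAddCircle) (θ' : UnitAddCircle)
    (hu : ∀ k, (ℓ : ℤ) • u (k + 1) = u k) :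
    (∀ k, (ℓ : ℤ) • shadow ℓ hℓ u θ' (k + 1) = shadow ℓ hℓ u θ' k) ∧
    shadow ℓ hℓ u θ' 0 = θ' ∧
    ∀ k, dist (u k) (shadow ℓ hℓ u θ' k) ≤ dist (u 0) θ' / (ℓ : ℝ) ^ k := by
  have hℓpos : (0:ℝ) < ℓ := by positivity
  refine ⟨fun k => (step ℓ hℓ (u (k + 1)) (shadow ℓ hℓ u θ' k)).choose_spec.1, rfl, ?_⟩
  intro k
  induction k with
  | zero => simp [shadow]
  | succ k ih =>
    have h := (step ℓ hℓ (u (k + 1)) (shadow ℓ hℓ u θ' k)).choose_spec.2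
    calc dist (u (k + 1)) (shadow ℓ hℓ u θ' (k + 1))
        ≤ dist ((ℓ : ℤ) • u (k + 1)) (shadow ℓ hℓ u θ' k) / ℓ := h
      _ = dist (u k) (shadow ℓ hℓ u θ' k) / ℓ := by rw [hu k]
      _ ≤ (dist (u 0) θ' / (ℓ : ℝ) ^ k) / ℓ := by
          gcongr
      _ = dist (u 0) θ' / (ℓ : ℝ) ^ (k + 1) := by
          rw [div_div, pow_succ]



lemma key (ℓ : ℕ) (hℓ : 2 ≤ ℓ) (lam : ℝ) (hlam : lam ∈ Set.Ioo (0:ℝ) 1)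
    (τ : UnitAddCircle → ℝ) (L : ℝ)
    (hτ : ∀ x y : UnitAddCircle, |τ x - τ y| ≤ L * dist x y) (hL : 0 ≤ L)
    (C : ℝ) (hC : ∀ x, |τ x| ≤ C)
    (θ' : UnitAddCircle) (u v : ℕ → UnitAddCircle)
    (hd : ∀ k, dist (u k) (v k) ≤ dist (u 0) θ' / (ℓ : ℝ) ^ k) :
    |(∑' k : ℕ, lam ^ k * τ (u (k + 1))) - ∑' k : ℕ, lam ^ k * τ (v (k + 1))|
      ≤ (L / ((ℓ : ℝ) - lam)) * dist (u 0) θ' := by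
  obtain ⟨hlam0, hlam1⟩ := hlam
  have hℓR : (2:ℝ) ≤ (ℓ:ℝ) := by exact_mod_cast hℓ
  have hℓlam : lam < (ℓ:ℝ) := by linarith
  have hℓpos : (0:ℝ) < ℓ := by linarith
  set d := dist (u 0) θ' with hdd
  have hd0 : 0 ≤ d := dist_nonneg
  have hsum : ∀ w : ℕ → UnitAddCircle, Summable (fun k : ℕ => lam ^ k * τ (w (k + 1))) := by
    intro w
    apply Summable.of_norm_bounded
      ((summable_geometric_of_lt_one hlam0.le hlam1).mul_left C)
    intro k
    rw [Real.norm_eq_abs, abs_mul, abs_pow, abs_of_pos hlam0, mul_comm]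
    exact mul_le_mul_of_nonneg_right (hC _) (by positivity)
  have hdiff : (∑' k : ℕ, lam ^ k * τ (u (k + 1))) - ∑' k : ℕ, lam ^ k * τ (v (k + 1))
      = ∑' k : ℕ, lam ^ k * (τ (u (k + 1)) - τ (v (k + 1))) := by
    rw [← Summable.tsum_sub (hsum u) (hsum v)]
    congr 1; ext k; ring
  rw [hdiff, ← Real.norm_eq_abs]
  have hgs : HasSum (fun k : ℕ => (L * d / ℓ) * (lam / ℓ) ^ k)
      ((L * d / ℓ) * (1 - lam / ℓ)⁻¹) :=
    (hasSum_geometric_of_lt_one (by positivity) (by rw [div_lt_one hℓpos]; linarith)).mul_left _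
  have hbound : ∀ k : ℕ, ‖lam ^ k * (τ (u (k + 1)) - τ (v (k + 1)))‖
      ≤ (L * d / ℓ) * (lam / ℓ) ^ k := by
    intro k
    rw [Real.norm_eq_abs, abs_mul, abs_pow, abs_of_pos hlam0]
    calc lam ^ k * |τ (u (k + 1)) - τ (v (k + 1))|
        ≤ lam ^ k * (L * (d / (ℓ : ℝ) ^ (k + 1))) := by
          apply mul_le_mul_of_nonneg_left _ (by positivity)
          exact (hτ _ _).trans (mul_le_mul_of_nonneg_left (hd (k + 1)) hL)
      _ = (L * d / ℓ) * (lam / ℓ) ^ k := by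
          rw [div_pow, pow_succ]
          field_simp
  have := tsum_of_norm_bounded hgs hbound
  refine this.trans (le_of_eq ?_)
  have h1 : (1 : ℝ) - lam / ℓ = ((ℓ : ℝ) - lam) / ℓ := by field_simp
  rw [h1]
  have h2 : ((ℓ:ℝ) - lam) ≠ 0 := by linarith
  field_simp




theorem stmt3 (ℓ : ℕ) (hℓ : 2 ≤ ℓ) (lam : ℝ) (hlam : lam ∈ Set.Ioo (0:ℝ) 1)
    (τ : UnitAddCircle → ℝ) (L : ℝ)
    (hτ : ∀ x y : UnitAddCircle, |τ x - τ y| ≤ L * dist x y) :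
    (∀ θ θ' : UnitAddCircle,
        |upperB ℓ lam τ θ - upperB ℓ lam τ θ'| ≤ (L / ((ℓ : ℝ) - lam)) * dist θ θ') ∧
    (∀ θ θ' : UnitAddCircle,
        |lowerB ℓ lam τ θ - lowerB ℓ lam τ θ'| ≤ (L / ((ℓ : ℝ) - lam)) * dist θ θ') := by
  classical
  obtain ⟨hlam0, hlam1⟩ := hlam
  have hℓR : (2:ℝ) ≤ (ℓ:ℝ) := by exact_mod_cast hℓ
  have hℓlam : lam < (ℓ:ℝ) := by linarith
  -- L is nonnegative
  have hL : 0 ≤ L := by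
    have hne : ((1/2 : ℝ) : UnitAddCircle) ≠ 0 := by
      intro h
      have : ‖((1/2 : ℝ) : UnitAddCircle)‖ = 0 := by rw [h]; simp
      rw [UnitAddCircle.norm_eq] at this
      norm_num [round_eq] at this
    have hdpos : 0 < dist ((1/2 : ℝ) : UnitAddCircle) (0 : UnitAddCircle) :=
      dist_pos.mpr hne
    have := (abs_nonneg _).trans (hτ ((1/2 : ℝ) : UnitAddCircle) 0)
    nlinarith
  -- τ is bounded
  obtain ⟨C, hC⟩ : ∃ C : ℝ, ∀ x, |τ x| ≤ C := by
    have hlip : LipschitzWith ⟨L, hL⟩ τ := by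
      apply LipschitzWith.of_dist_le_mul
      intro x y
      rw [Real.dist_eq]
      exact hτ x y
    obtain ⟨C, hC⟩ := isCompact_univ.exists_bound_of_continuousOn
      hlip.continuous.continuousOn (f := τ)
    exact ⟨C, fun x => hC x trivial⟩
  set A : UnitAddCircle → Set ℝ := fun θ =>
    {x : ℝ | ∃ u : ℕ → UnitAddCircle, (∀ k, (ℓ : ℤ) • u (k + 1) = u k) ∧ u 0 = θ ∧
      x = ∑' k : ℕ, lam ^ k * τ (u (k + 1))} with hA
  have hne : ∀ θ, (A θ).Nonempty := fun θ =>
    ⟨_, orbitFrom ℓ hℓ θ, (orbitFrom_spec ℓ hℓ θ).1, (orbitFrom_spec ℓ hℓ θ).2, rfl⟩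
  have hsub : ∀ θ, A θ ⊆ Set.Icc (-(C * (1 - lam)⁻¹)) (C * (1 - lam)⁻¹) := by
    intro θ x hx
    obtain ⟨u, hu, hu0, rfl⟩ := hx
    have hgs : HasSum (fun k : ℕ => C * lam ^ k) (C * (1 - lam)⁻¹) :=
      (hasSum_geometric_of_lt_one hlam0.le hlam1).mul_left C
    have hb := tsum_of_norm_bounded hgs (f := fun k : ℕ => lam ^ k * τ (u (k + 1))) ?_
    · rw [Real.norm_eq_abs, abs_le] at hb
      exact ⟨hb.1, hb.2⟩
    · intro k
      rw [Real.norm_eq_abs, abs_mul, abs_pow, abs_of_pos hlam0, mul_comm]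
      exact mul_le_mul_of_nonneg_right (hC _) (by positivity)
  have hbdda : ∀ θ, BddAbove (A θ) := fun θ =>
    ⟨C * (1 - lam)⁻¹, fun x hx => (hsub θ hx).2⟩
  have hbddb : ∀ θ, BddBelow (A θ) := fun θ =>
    ⟨-(C * (1 - lam)⁻¹), fun x hx => (hsub θ hx).1⟩
  -- for every orbit from θ and every θ', there is a close element of A θ'
  have hclose : ∀ θ θ' : UnitAddCircle, ∀ x ∈ A θ, ∃ y ∈ A θ',
      |x - y| ≤ (L / ((ℓ : ℝ) - lam)) * dist θ θ' := by
    intro θ θ' x hx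
    obtain ⟨u, hu, hu0, rfl⟩ := hx
    obtain ⟨hv, hv0, hd⟩ := shadow_spec ℓ hℓ u θ' hu
    refine ⟨∑' k : ℕ, lam ^ k * τ (shadow ℓ hℓ u θ' (k + 1)), ⟨_, hv, hv0, rfl⟩, ?_⟩
    have := key ℓ hℓ lam ⟨hlam0, hlam1⟩ τ L hτ hL C hC θ' u (shadow ℓ hℓ u θ') hd
    rwa [hu0] at this
  have habs : ∀ (S : UnitAddCircle → Set ℝ), (∀ θ, (S θ).Nonempty) →
      (∀ θ, BddAbove (S θ)) →
      (∀ θ θ' : UnitAddCircle, ∀ x ∈ S θ, ∃ y ∈ S θ',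
        |x - y| ≤ (L / ((ℓ : ℝ) - lam)) * dist θ θ') →
      ∀ θ θ' : UnitAddCircle,
        |sSup (S θ) - sSup (S θ')| ≤ (L / ((ℓ : ℝ) - lam)) * dist θ θ' := by
    intro S hSne hSbdd hScl θ θ'
    have main : ∀ a b : UnitAddCircle,
        sSup (S a) ≤ sSup (S b) + (L / ((ℓ : ℝ) - lam)) * dist a b := by
      intro a b
      apply csSup_le (hSne a)
      intro x hx
      obtain ⟨y, hy, hxy⟩ := hScl a b x hx
      have h1 : y ≤ sSup (S b) := le_csSup (hSbdd b) hy
      have h2 : x - y ≤ (L / ((ℓ : ℝ) - lam)) * dist a b := (abs_le.mp hxy).2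
      linarith
    rw [abs_sub_le_iff]
    constructor
    · linarith [main θ θ']
    · have := main θ' θ
      rw [dist_comm θ' θ] at this
      linarith
  have habsInf : ∀ θ θ' : UnitAddCircle,
      |sInf (A θ) - sInf (A θ')| ≤ (L / ((ℓ : ℝ) - lam)) * dist θ θ' := by
    intro θ θ'
    have main : ∀ a b : UnitAddCircle,
        sInf (A b) - (L / ((ℓ : ℝ) - lam)) * dist a b ≤ sInf (A a) := by
      intro a b
      apply le_csInf (hne a)
      intro x hx
      obtain ⟨y, hy, hxy⟩ := hclose a b x hx
      have h1 : sInf (A b) ≤ y := csInf_le (hbddb b) hy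
      linarith [(abs_le.mp hxy).2, (abs_le.mp hxy).1]
    rw [abs_sub_le_iff]
    constructor
    · have := main θ' θ
      rw [dist_comm θ' θ] at this
      linarith
    · linarith [main θ θ']
  constructor
  · intro θ θ'
    exact habs A hne hbdda hclose θ θ'
  · intro θ θ'
    exact habsInf θ θ'
end

section
/- Let ℓ ≥ 2, λ ∈ (0,1), and τ, μ ∈ L¹(ℝ/ℤ, ℝ) with τ(θ) = μ(ℓθ) - λμ(θ) almost everywhere. Then for every k ∈ ℕ not divisible by ℓ, Σ_{n≥0} λⁿ τ̂(ℓⁿk) = 0, where τ̂(q) denotes the q-th Fourier coefficient of τ. -/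
open MeasureTheory
open scoped Topology
instance fact01 : Fact ((0:ℝ) < 1) := ⟨one_pos⟩

lemma mp_zsmul (m : ℤ) (hm : m ≠ 0) :
    MeasurePreserving (fun θ : UnitAddCircle => m • θ)
      AddCircle.haarAddCircle AddCircle.haarAddCircle :=
  Measure.measurePreserving_zsmul _ hm

lemma norm_fourierCoeff_le (g : UnitAddCircle → ℂ) (q : ℤ) :
    ‖fourierCoeff g q‖ ≤ ∫ θ, ‖g θ‖ ∂AddCircle.haarAddCircle := by
  rw [fourierCoeff]
  refine (norm_integral_le_integral_norm _).trans_eq ?_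
  refine integral_congr_ae (Filter.Eventually.of_forall fun θ => ?_)
  simp [norm_smul, fourier_apply, Circle.norm_coe]

lemma coeff_dilate (g : UnitAddCircle → ℂ)
    (hg : AEStronglyMeasurable g AddCircle.haarAddCircle) (m : ℤ) (hm : m ≠ 0) (q : ℤ) :
    fourierCoeff (fun θ : UnitAddCircle => g (m • θ)) (m * q) = fourierCoeff g q := by
  have h := mp_zsmul m hm
  have hF : AEStronglyMeasurable (fun t : UnitAddCircle => fourier (-q) t • g t)
      AddCircle.haarAddCircle :=
    ((fourier (-q)).continuous.aestronglyMeasurable).smul hg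
  have hmap := MeasureTheory.integral_map (φ := fun θ : UnitAddCircle => m • θ)
      (f := fun t : UnitAddCircle => fourier (-q) t • g t)
      h.measurable.aemeasurable (by rw [h.map_eq]; exact hF)
  rw [h.map_eq] at hmap
  rw [fourierCoeff, fourierCoeff, hmap]
  refine integral_congr_ae (Filter.Eventually.of_forall fun θ => ?_)
  show fourier (-(m * q)) θ • g (m • θ) = fourier (-q) (m • θ) • g (m • θ)
  congr 1
  simp only [fourier_apply, smul_smul]
  congr 2
  ring

lemma coeff_dilate_zero (g : UnitAddCircle → ℂ) (ℓ : ℕ) (hℓ : 2 ≤ ℓ) (q : ℤ)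
    (hq : ¬ (ℓ:ℤ) ∣ q) :
    fourierCoeff (fun θ : UnitAddCircle => g ((ℓ:ℤ) • θ)) q = 0 := by
  have hℓ0 : (ℓ:ℝ) ≠ 0 := by positivity
  have hℓc : ((ℓ:ℝ):ℂ) ≠ 0 := by exact_mod_cast hℓ0
  set u : UnitAddCircle := (((ℓ:ℝ)⁻¹ : ℝ) : UnitAddCircle) with hu_def
  have hu : (ℓ:ℤ) • u = 0 := by
    rw [hu_def, ← QuotientAddGroup.mk_zsmul]
    have h1 : (ℓ:ℤ) • ((ℓ:ℝ)⁻¹) = (1:ℝ) := by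
      rw [zsmul_eq_mul]; push_cast; field_simp
    rw [h1]
    exact AddCircle.coe_period 1
  have hπ : (2 * (Real.pi:ℂ) * Complex.I) ≠ 0 := by
    simp [Real.pi_ne_zero, Complex.I_ne_zero]
  have hfu : fourier (-q) u ≠ 1 := by
    rw [hu_def, fourier_coe_apply]
    intro h
    rw [Complex.exp_eq_one_iff] at h
    obtain ⟨n, hn⟩ := h
    apply hq
    refine ⟨-n, ?_⟩
    have key : ((-q : ℤ):ℂ) * (((ℓ:ℝ):ℂ))⁻¹ = n := by
      have h' : 2 * (Real.pi:ℂ) * Complex.I * (((-q : ℤ):ℂ) * (((ℓ:ℝ):ℂ))⁻¹)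
          = 2 * (Real.pi:ℂ) * Complex.I * n := by
        calc 2 * (Real.pi:ℂ) * Complex.I * (((-q : ℤ):ℂ) * (((ℓ:ℝ):ℂ))⁻¹)
            = 2 * (Real.pi:ℂ) * Complex.I * ((-q : ℤ):ℂ) * (((ℓ:ℝ)⁻¹ : ℝ):ℂ) / ((1:ℝ):ℂ) := by
              push_cast; ring
          _ = (n:ℂ) * (2 * (Real.pi:ℂ) * Complex.I) := hn
          _ = 2 * (Real.pi:ℂ) * Complex.I * n := by ring
      exact mul_left_cancel₀ hπ h'
    have hℓc' : (ℓ:ℂ) ≠ 0 := Nat.cast_ne_zero.mpr (by omega)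
    have hqc : (q:ℂ) = ((ℓ * -n : ℤ):ℂ) := by
      push_cast
      push_cast at key
      rw [mul_inv_eq_iff_eq_mul₀ hℓc'] at key
      linear_combination -key
    exact_mod_cast hqc
  have key : fourierCoeff (fun θ : UnitAddCircle => g ((ℓ:ℤ) • θ)) q
      = fourier (-q) u * fourierCoeff (fun θ : UnitAddCircle => g ((ℓ:ℤ) • θ)) q := by
    conv_lhs => rw [fourierCoeff,
      ← integral_add_right_eq_self (μ := AddCircle.haarAddCircle)
        (fun θ : UnitAddCircle => fourier (-q) θ • g ((ℓ:ℤ) • θ)) u]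
    rw [fourierCoeff, ← integral_const_mul]
    refine integral_congr_ae (Filter.Eventually.of_forall fun θ => ?_)
    show fourier (-q) (θ + u) • g ((ℓ:ℤ) • (θ + u))
        = fourier (-q) u * (fourier (-q) θ • g ((ℓ:ℤ) • θ))
    have h1 : (ℓ:ℤ) • (θ + u) = (ℓ:ℤ) • θ := by rw [smul_add, hu, add_zero]
    have h2 : (fourier (-q) (θ + u) : ℂ) = fourier (-q) θ * fourier (-q) u := by
      simp [fourier_apply, smul_add, AddCircle.toCircle_add]
    rw [h1, h2, smul_eq_mul, smul_eq_mul]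
    ring
  have h0 : (1 - fourier (-q) u) * fourierCoeff (fun θ : UnitAddCircle => g ((ℓ:ℤ) • θ)) q = 0 := by
    rw [sub_mul, one_mul, ← key, sub_self]
  rcases mul_eq_zero.mp h0 with h | h
  · exact absurd (by linear_combination -h : (fourier (-q) u : ℂ) = 1) hfu
  · exact h


open AddCircle in
lemma haar_eq_volume : (haarAddCircle : Measure UnitAddCircle) = volume := by
  rw [volume_eq_smul_haarAddCircle]; simp

theorem stmt8 (ℓ : ℕ) (hℓ : 2 ≤ ℓ) (lam : ℝ) (hlam : lam ∈ Set.Ioo (0:ℝ) 1)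
    (τ μ : UnitAddCircle → ℝ) (hτ : Integrable τ) (hμ : Integrable μ)
    (heq : ∀ᵐ θ : UnitAddCircle, τ θ = μ ((ℓ : ℤ) • θ) - lam * μ θ) :
    ∀ k : ℕ, 0 < k → ¬ ℓ ∣ k →
      ∑' n : ℕ, (lam ^ n : ℂ) *
        fourierCoeff (fun θ : UnitAddCircle => (τ θ : ℂ)) ((ℓ : ℤ) ^ n * (k : ℤ)) = 0 := by
  intro k hk hkd
  have hℓ0 : (ℓ:ℤ) ≠ 0 := by positivity
  set μc : UnitAddCircle → ℂ := fun θ => (μ θ : ℂ) with hμc_def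
  set τc : UnitAddCircle → ℂ := fun θ => (τ θ : ℂ) with hτc_def
  have hμc : Integrable μc AddCircle.haarAddCircle := by
    rw [haar_eq_volume]; exact hμ.ofReal
  have hτc : Integrable τc AddCircle.haarAddCircle := by
    rw [haar_eq_volume]; exact hτ.ofReal
  have hmp := mp_zsmul (ℓ:ℤ) hℓ0
  have hμcd : Integrable (fun θ : UnitAddCircle => μc ((ℓ:ℤ) • θ)) AddCircle.haarAddCircle :=
    (hmp.integrable_comp hμc.aestronglyMeasurable).mpr hμc
  have hcoeff : ∀ q : ℤ, fourierCoeff τc q =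
      fourierCoeff (fun θ : UnitAddCircle => μc ((ℓ:ℤ) • θ)) q - (lam:ℂ) * fourierCoeff μc q := by
    intro q
    have hb : ∀ x : UnitAddCircle, ‖(fourier (-q) x : ℂ)‖ ≤ 1 := by
      intro x; simp [fourier_apply, Circle.norm_coe]
    have h1 : Integrable (fun θ : UnitAddCircle => fourier (-q) θ • μc ((ℓ:ℤ) • θ))
        AddCircle.haarAddCircle := by
      simpa [smul_eq_mul] using
        hμcd.bdd_mul ((fourier (-q)).continuous.aestronglyMeasurable) (Filter.Eventually.of_forall hb)
    have h2 : Integrable (fun θ : UnitAddCircle => fourier (-q) θ • μc θ)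
        AddCircle.haarAddCircle := by
      simpa [smul_eq_mul] using
        hμc.bdd_mul ((fourier (-q)).continuous.aestronglyMeasurable) (Filter.Eventually.of_forall hb)
    have heq' : ∀ᵐ θ ∂AddCircle.haarAddCircle,
        fourier (-q) θ • τc θ =
          fourier (-q) θ • μc ((ℓ:ℤ) • θ) - (lam:ℂ) * (fourier (-q) θ • μc θ) := by
      rw [haar_eq_volume]
      filter_upwards [heq] with θ h
      simp only [hτc_def, hμc_def, smul_eq_mul, h]
      push_cast
      ring
    rw [fourierCoeff, fourierCoeff, fourierCoeff, integral_congr_ae heq',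
      integral_sub h1 (h2.const_mul _), integral_const_mul]
  set c : ℕ → ℂ := fun n => fourierCoeff μc ((ℓ:ℤ)^n * k) with hc_def
  set f : ℕ → ℂ := fun n => (lam ^ n : ℂ) * fourierCoeff τc ((ℓ:ℤ)^n * k) with hf_def
  have hnd : ¬ (ℓ:ℤ) ∣ (k:ℤ) := fun h => hkd (by exact_mod_cast h)
  have hf0 : f 0 = -((lam:ℂ) * c 0) := by
    rw [hf_def, hc_def]
    simp only [pow_zero, one_mul]
    rw [hcoeff, coeff_dilate_zero μc ℓ hℓ (k:ℤ) hnd]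
    ring
  have hfs : ∀ n : ℕ, f (n+1) = (lam:ℂ)^(n+1) * (c n - (lam:ℂ) * c (n+1)) := by
    intro n
    have hmul : (ℓ:ℤ)^(n+1) * k = (ℓ:ℤ) * ((ℓ:ℤ)^n * k) := by ring
    rw [hf_def, hc_def]
    simp only [hmul]
    rw [hcoeff, coeff_dilate μc hμc.aestronglyMeasurable (ℓ:ℤ) hℓ0 ((ℓ:ℤ)^n * k)]
  have hS : ∀ N : ℕ, ∑ n ∈ Finset.range (N+1), f n = -((lam:ℂ)^(N+1) * c N) := by
    intro N
    induction N with
    | zero => simpa using hf0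
    | succ N ih =>
      rw [Finset.sum_range_succ, ih, hfs N]
      ring
  set C : ℝ := ∫ θ, ‖τc θ‖ ∂AddCircle.haarAddCircle with hC_def
  have hsum : Summable f := by
    refine Summable.of_norm_bounded (g := fun n => lam ^ n * C) ?_ ?_
    · exact (summable_geometric_of_lt_one hlam.1.le hlam.2).mul_right C
    · intro n
      rw [hf_def, norm_mul]
      have h1 : ‖((lam:ℂ)) ^ n‖ = lam ^ n := by
        rw [norm_pow, Complex.norm_real, Real.norm_eq_abs, abs_of_pos hlam.1]
      rw [h1]
      exact mul_le_mul_of_nonneg_left (norm_fourierCoeff_le τc _)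
        (pow_nonneg hlam.1.le n)
  have hT1 : Filter.Tendsto (fun N => ∑ n ∈ Finset.range (N+1), f n)
      Filter.atTop (𝓝 (∑' n, f n)) :=
    hsum.hasSum.tendsto_sum_nat.comp (Filter.tendsto_add_atTop_nat 1)
  have hT0 : Filter.Tendsto (fun N => ∑ n ∈ Finset.range (N+1), f n)
      Filter.atTop (𝓝 0) := by
    have hb : ∀ N, ‖∑ n ∈ Finset.range (N+1), f n‖ ≤
        lam ^ (N+1) * ∫ θ, ‖μc θ‖ ∂AddCircle.haarAddCircle := by
      intro N
      rw [hS N, norm_neg, norm_mul, norm_pow, Complex.norm_real, Real.norm_eq_abs,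
        abs_of_pos hlam.1]
      exact mul_le_mul_of_nonneg_left (norm_fourierCoeff_le μc _)
        (pow_nonneg hlam.1.le (N+1))
    refine squeeze_zero_norm hb ?_
    have h := (tendsto_pow_atTop_nhds_zero_of_lt_one hlam.1.le hlam.2).comp
      (Filter.tendsto_add_atTop_nat 1)
    simpa using h.mul_const (∫ θ, ‖μc θ‖ ∂AddCircle.haarAddCircle)
  have hfin : ∑' n, f n = 0 := tendsto_nhds_unique hT1 hT0
  exact hfin
end

section
/- Let ℓ ≥ 2 and let τ : ℝ/ℤ → ℝ be a non-constant Lipschitz function with ∫τ = 0. Suppose k ∈ ℤ with ℓ ∤ k and p ≥ 0 satisfy τ̂(ℓʲk) = 0 for 0 ≤ j < p and τ̂(ℓᵖk) ≠ 0. If there exist m ≥ 0 and a Lipschitz μ : ℝ/ℤ → ℝ with L₁ᵐ μ = τ (where L₁ρ = ρ∘m_ℓ - ρ), then m ≤ (‖τ‖_L + 4kℓ^{p+1}|τ̂(ℓ^{p+1}k)|) / (4kℓ^{p+1}|τ̂(ℓᵖk)|). -/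
open MeasureTheory

open MeasureTheory AddCircle

namespace Stmt13Aux

lemma contInt {f : UnitAddCircle → ℂ} (hf : Continuous f) : Integrable f haarAddCircle :=
  hf.integrable_of_hasCompactSupport (isClosed_tsupport f).isCompact

lemma lip_cont {ρ : UnitAddCircle → ℝ} {K : ℝ}
    (hρ : ∀ x y : UnitAddCircle, |ρ x - ρ y| ≤ K * dist x y) : Continuous ρ := by
  have hK : 0 ≤ K ∨ ∀ x y : UnitAddCircle, ρ x = ρ y := by
    by_cases h : ∀ x y : UnitAddCircle, ρ x = ρ y
    · exact Or.inr h
    · push_neg at h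
      obtain ⟨x, y, hxy⟩ := h
      left
      by_contra hK
      push_neg at hK
      have := hρ x y
      nlinarith [abs_nonneg (ρ x - ρ y), dist_nonneg (x := x) (y := y),
        abs_pos.mpr (sub_ne_zero.mpr hxy)]
  rcases hK with hK | hK
  · refine LipschitzWith.continuous (K := K.toNNReal) ?_
    apply LipschitzWith.of_dist_le_mul
    intro x y
    rw [Real.dist_eq, Real.coe_toNNReal K hK]
    exact hρ x y
  · have : ρ = fun _ => ρ 0 := funext fun x => hK x 0
    rw [this]; exact continuous_const

lemma fourier_smul_apply (n q : ℤ) (x : UnitAddCircle) :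
    fourier n (q • x) = fourier (q * n) x := by
  rw [fourier_apply, fourier_apply, smul_comm, smul_smul]

lemma fourier_apply_add' (n : ℤ) (x y : UnitAddCircle) :
    fourier n (x + y) = fourier n x * fourier n y := by
  rw [fourier_apply, fourier_apply, fourier_apply, smul_add, toCircle_add, Circle.coe_mul]

lemma fourierCoeff_sub' {f g : UnitAddCircle → ℂ} (hf : Continuous f) (hg : Continuous g)
    (n : ℤ) :
    fourierCoeff (fun θ : UnitAddCircle => f θ - g θ) n = fourierCoeff f n - fourierCoeff g n := by
  unfold fourierCoeff
  simp_rw [smul_sub]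
  exact integral_sub (contInt ((map_continuous (fourier (-n))).smul hf))
    (contInt ((map_continuous (fourier (-n))).smul hg))

lemma comp_coeff (f : UnitAddCircle → ℂ) (hf : Continuous f) (ℓ : ℤ) (hℓ : ℓ ≠ 0) (n : ℤ) :
    fourierCoeff (fun θ : UnitAddCircle => f (ℓ • θ)) (ℓ * n) = fourierCoeff f n := by
  have hp : MeasurePreserving (fun x : UnitAddCircle => ℓ • x) haarAddCircle haarAddCircle :=
    Measure.measurePreserving_zsmul _ hℓ
  unfold fourierCoeff
  have h1 : ∀ θ : UnitAddCircle, fourier (-(ℓ * n)) θ • f (ℓ • θ)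
      = (fun x => fourier (-n) x • f x) (ℓ • θ) := by
    intro θ
    simp only [fourier_smul_apply, mul_neg]
  simp_rw [h1]
  have h2 := integral_map (μ := haarAddCircle) hp.measurable.aemeasurable
    (((map_continuous (fourier (-n))).smul hf)).aestronglyMeasurable
  rw [hp.map_eq] at h2
  exact h2.symm

lemma comp_coeff_zero (f : UnitAddCircle → ℂ) (ℓ : ℕ) (hℓ : 2 ≤ ℓ)
    (q : ℤ) (hq : ¬ (ℓ : ℤ) ∣ q) :
    fourierCoeff (fun θ : UnitAddCircle => f ((ℓ : ℤ) • θ)) q = 0 := by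
  set c : UnitAddCircle := (((ℓ : ℝ)⁻¹ : ℝ) : UnitAddCircle) with hcdef
  have hℓ0 : (ℓ : ℝ) ≠ 0 := Nat.cast_ne_zero.mpr (by omega)
  have hc : (ℓ : ℤ) • c = 0 := by
    rw [hcdef, ← AddCircle.coe_zsmul]
    have : ((ℓ : ℤ) • ((ℓ:ℝ)⁻¹) : ℝ) = 1 := by
      rw [zsmul_eq_mul]; push_cast; exact mul_inv_cancel₀ hℓ0
    rw [this]
    exact AddCircle.coe_period 1
  set ω : ℂ := fourier (-q) c with hωdef
  have hω : ω ≠ 1 := by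
    intro h
    rw [hωdef, hcdef, fourier_coe_apply] at h
    rw [Complex.exp_eq_one_iff] at h
    obtain ⟨n, hn⟩ := h
    have hℓ0' : (ℓ : ℂ) ≠ 0 := by exact_mod_cast Nat.cast_ne_zero.mpr (by omega)
    have hπ : (Real.pi : ℂ) ≠ 0 := by exact_mod_cast Real.pi_ne_zero
    have hI := Complex.I_ne_zero
    have key : (-q : ℂ) = n * ℓ := by
      field_simp at hn
      have h2 : (-(q:ℂ)) * (2 * Real.pi * Complex.I) = (n * ℓ) * (2 * Real.pi * Complex.I) := by
        push_cast at hn; field_simp at hn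
        linear_combination (2 * (Real.pi:ℂ) * Complex.I) * hn
      exact mul_right_cancel₀ (by simp [hπ, hI] : (2 * (Real.pi:ℂ) * Complex.I) ≠ 0) h2
    apply hq
    refine ⟨-n, ?_⟩
    exact_mod_cast (by push_cast; linear_combination -key : (q : ℂ) = (ℓ : ℤ) * (-n : ℤ))
  have key : ∀ θ : UnitAddCircle,
      (fun θ => (fourier (-q) θ : ℂ) • f ((ℓ:ℤ) • θ)) (c + θ)
        = ω • (fun θ => (fourier (-q) θ : ℂ) • f ((ℓ:ℤ) • θ)) θ := by
    intro θ
    simp only [smul_add, hc, zero_add, fourier_apply_add', smul_eq_mul, hωdef, mul_assoc]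
  have h1 : fourierCoeff (fun θ : UnitAddCircle => f ((ℓ : ℤ) • θ)) q
      = ω • fourierCoeff (fun θ : UnitAddCircle => f ((ℓ : ℤ) • θ)) q := by
    unfold fourierCoeff
    conv_lhs => rw [← integral_add_left_eq_self (μ := haarAddCircle)
      (fun θ : UnitAddCircle => (fourier (-q) θ : ℂ) • f ((ℓ:ℤ) • θ)) c]
    simp_rw [key]
    rw [integral_smul]
  rw [smul_eq_mul] at h1
  have h2 : (ω - 1) * fourierCoeff (fun θ : UnitAddCircle => f ((ℓ : ℤ) • θ)) q = 0 := by
    linear_combination -h1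
  rcases mul_eq_zero.mp h2 with h | h
  · exact absurd (sub_eq_zero.mp h) hω
  · exact h

lemma decay (ρ : UnitAddCircle → ℝ) (K : ℝ) (hK : 0 ≤ K)
    (hρ : ∀ x y : UnitAddCircle, |ρ x - ρ y| ≤ K * dist x y) (q : ℤ) (hq : q ≠ 0) :
    ‖fourierCoeff (fun θ : UnitAddCircle => (ρ θ : ℂ)) q‖ ≤ K / (4 * |(q : ℝ)|) := by
  have hcont : Continuous ρ := lip_cont hρ
  set f : UnitAddCircle → ℂ := fun θ => (ρ θ : ℂ) with hf
  have hfc : Continuous f := Complex.continuous_ofReal.comp hcont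
  set cr : ℝ := (1 : ℝ) / 2 / ((-q : ℤ) : ℝ) with hcr
  set c : UnitAddCircle := (cr : UnitAddCircle) with hcdef
  have hshift : ∀ x : UnitAddCircle, (fourier (-q) (x + c) : ℂ) = -fourier (-q) x :=
    fun x => fourier_add_half_inv_index (T := 1) (n := -q) (by simpa using hq) one_pos x
  have hint1 : Integrable (fun θ : UnitAddCircle => (fourier (-q) θ : ℂ) • f θ) haarAddCircle :=
    contInt ((map_continuous (fourier (-q))).smul hfc)
  have hint2 : Integrable (fun θ : UnitAddCircle => (fourier (-q) θ : ℂ) • f (θ + c))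
      haarAddCircle :=
    contInt ((map_continuous (fourier (-q))).smul (hfc.comp (continuous_id.add continuous_const)))
  have h1 : fourierCoeff f q
      = ∫ θ : UnitAddCircle, (fourier (-q) (θ + c) : ℂ) • f (θ + c) ∂haarAddCircle :=
    (integral_add_right_eq_self (μ := haarAddCircle)
      (fun θ : UnitAddCircle => (fourier (-q) θ : ℂ) • f θ) c).symm
  have h2 : fourierCoeff f q
      = -∫ θ : UnitAddCircle, (fourier (-q) θ : ℂ) • f (θ + c) ∂haarAddCircle := by
    rw [h1, ← integral_neg]
    congr 1; ext θ; rw [hshift θ, neg_smul]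
  have key : (2 : ℂ) * fourierCoeff f q
      = ∫ θ : UnitAddCircle, (fourier (-q) θ : ℂ) • (f θ - f (θ + c)) ∂haarAddCircle := by
    have h3 : (∫ θ : UnitAddCircle, (fourier (-q) θ : ℂ) • (f θ - f (θ + c)) ∂haarAddCircle)
        = (∫ θ : UnitAddCircle, (fourier (-q) θ : ℂ) • f θ ∂haarAddCircle)
          - ∫ θ : UnitAddCircle, (fourier (-q) θ : ℂ) • f (θ + c) ∂haarAddCircle := by
      simp_rw [smul_sub]
      exact integral_sub hint1 hint2
    rw [h3]
    have h4 : (∫ θ : UnitAddCircle, (fourier (-q) θ : ℂ) • f θ ∂haarAddCircle)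
        = fourierCoeff f q := rfl
    rw [h4]
    linear_combination h2
  have hcnorm : ‖c‖ ≤ |cr| := QuotientAddGroup.norm_mk_le_norm.trans (le_of_eq (Real.norm_eq_abs _))
  have hptw : ∀ θ : UnitAddCircle,
      ‖(fourier (-q) θ : ℂ) • (f θ - f (θ + c))‖ ≤ K * |cr| := by
    intro θ
    rw [norm_smul]
    have hfn : ‖(fourier (-q) θ : ℂ)‖ = 1 := by simp [fourier_apply, Circle.norm_coe]
    rw [hfn, one_mul]
    have : ‖f θ - f (θ + c)‖ = |ρ θ - ρ (θ + c)| := by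
      rw [hf, ← Complex.ofReal_sub, Complex.norm_real, Real.norm_eq_abs]
    rw [this]
    refine (hρ _ _).trans ?_
    have : dist θ (θ + c) ≤ |cr| := by
      rw [dist_eq_norm, sub_add_eq_sub_sub, sub_self, zero_sub, norm_neg]
      exact hcnorm
    exact mul_le_mul_of_nonneg_left this hK
  have hbound : ‖∫ θ : UnitAddCircle, (fourier (-q) θ : ℂ) • (f θ - f (θ + c)) ∂haarAddCircle‖
      ≤ K * |cr| := by
    have := norm_integral_le_of_norm_le_const (μ := haarAddCircle)
      (C := K * |cr|) (Filter.Eventually.of_forall hptw)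
    simpa using this
  rw [← key] at hbound
  rw [norm_mul] at hbound
  have h2n : ‖(2 : ℂ)‖ = 2 := by norm_num
  rw [h2n] at hbound
  have hq0 : (0:ℝ) < |(q:ℝ)| := by
    rw [abs_pos]; exact_mod_cast hq
  have hcrneg : cr = -(1/(2*(q:ℝ))) := by rw [hcr]; push_cast; ring
  have hcrval : |cr| = 1 / (2 * |(q:ℝ)|) := by
    rw [hcrneg, abs_neg, abs_div, abs_mul]
    norm_num
  rw [hcrval] at hbound
  have e : K * (1 / (2 * |(q:ℝ)|)) = K / (2 * |(q:ℝ)|) := by ring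
  rw [e] at hbound
  have hb2 : 2 * ‖fourierCoeff f q‖ * (2 * |(q:ℝ)|) ≤ K := by
    rw [← le_div_iff₀ (by positivity : (0:ℝ) < 2 * |(q:ℝ)|)]
    exact hbound
  rw [le_div_iff₀ (by positivity : (0:ℝ) < 4 * |(q:ℝ)|)]
  nlinarith [norm_nonneg (fourierCoeff f q)]

lemma coe_int_zero (n : ℤ) : (((n : ℝ)) : UnitAddCircle) = 0 := by
  rw [show ((n : ℝ)) = n • (1:ℝ) by simp, AddCircle.coe_zsmul, AddCircle.coe_period, smul_zero]

lemma dist_coe_le (a b : ℝ) : dist ((a : UnitAddCircle)) (b : UnitAddCircle) ≤ |a - b| := by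
  rw [dist_eq_norm, ← AddCircle.coe_sub]
  exact QuotientAddGroup.norm_mk_le_norm.trans (le_of_eq (Real.norm_eq_abs _))

lemma exists_rep (u v : UnitAddCircle) :
    ∃ a b : ℝ, u = (a : UnitAddCircle) ∧ v = (b : UnitAddCircle) ∧ |a - b| = dist u v := by
  obtain ⟨a, rfl⟩ := QuotientAddGroup.mk_surjective u
  obtain ⟨x, hx⟩ := QuotientAddGroup.mk_surjective (((a : UnitAddCircle)) - v)
  refine ⟨a, a - (x - round x), rfl, ?_, ?_⟩
  · have h0 : (((round x : ℝ)) : UnitAddCircle) = 0 := coe_int_zero _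
    have : ((x - round x : ℝ) : UnitAddCircle) = ((a : UnitAddCircle)) - v := by
      rw [AddCircle.coe_sub, h0, sub_zero, hx]
    rw [AddCircle.coe_sub, this]
    abel
  · have h0 : (((round x : ℝ)) : UnitAddCircle) = 0 := coe_int_zero _
    have hxx : ((x - round x : ℝ) : UnitAddCircle) = ((a : UnitAddCircle)) - v := by
      rw [AddCircle.coe_sub, h0, sub_zero, hx]
    rw [dist_eq_norm, ← hxx, UnitAddCircle.norm_eq,
      show a - (a - (x - (round x : ℝ))) = x - round x by ring,
      round_sub_intCast x (round x), sub_self, Int.cast_zero, sub_zero]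

lemma lip_down (ℓ : ℕ) (hℓ : 2 ≤ ℓ) (ρ σ : UnitAddCircle → ℝ)
    (hσ : ∀ θ, σ θ = ρ ((ℓ : ℤ) • θ) - ρ θ)
    (Kρ K : ℝ) (hK0 : 0 ≤ K)
    (hρL : ∀ x y : UnitAddCircle, |ρ x - ρ y| ≤ Kρ * dist x y)
    (hσL : ∀ x y : UnitAddCircle, |σ x - σ y| ≤ K * dist x y) :
    ∀ x y : UnitAddCircle, |ρ x - ρ y| ≤ K * dist x y := by
  intro u v
  obtain ⟨a, b, rfl, rfl, hab⟩ := exists_rep u v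
  have hℓR : (2:ℝ) ≤ (ℓ : ℝ) := by exact_mod_cast hℓ
  have hℓ0 : (0:ℝ) < (ℓ : ℝ) := by linarith
  have hρL' : ∀ x y : UnitAddCircle, |ρ x - ρ y| ≤ |Kρ| * dist x y := fun x y =>
    (hρL x y).trans (mul_le_mul_of_nonneg_right (le_abs_self _) dist_nonneg)
  set d := |a - b| with hd
  have hd0 : 0 ≤ d := abs_nonneg _
  have hsmul : ∀ n : ℕ, (ℓ : ℤ) • ((a / (ℓ:ℝ)^(n+1) : ℝ) : UnitAddCircle) = ((a / (ℓ:ℝ)^n : ℝ) : UnitAddCircle) := by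
    intro n
    rw [← AddCircle.coe_zsmul]
    congr 1
    rw [zsmul_eq_mul]
    push_cast
    field_simp
    ring
  have hsmulb : ∀ n : ℕ, (ℓ : ℤ) • ((b / (ℓ:ℝ)^(n+1) : ℝ) : UnitAddCircle) = ((b / (ℓ:ℝ)^n : ℝ) : UnitAddCircle) := by
    intro n
    rw [← AddCircle.coe_zsmul]
    congr 1
    rw [zsmul_eq_mul]
    push_cast
    field_simp
    ring
  set g : ℕ → ℝ := fun n => |ρ ((a / (ℓ:ℝ)^n : ℝ) : UnitAddCircle) - ρ ((b / (ℓ:ℝ)^n : ℝ) : UnitAddCircle)| with hg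
  have hdist : ∀ n : ℕ, dist (((a / (ℓ:ℝ)^n : ℝ)) : UnitAddCircle) (((b / (ℓ:ℝ)^n : ℝ)) : UnitAddCircle) ≤ d / (ℓ:ℝ)^n := by
    intro n
    refine (dist_coe_le _ _).trans ?_
    rw [div_sub_div_same, abs_div, abs_of_pos (by positivity : (0:ℝ) < (ℓ:ℝ)^n)]
  have step : ∀ n : ℕ, g n ≤ K * (d / (ℓ:ℝ)^(n+1)) + g (n+1) := by
    intro n
    have h1 : ρ ((a / (ℓ:ℝ)^n : ℝ) : UnitAddCircle) - ρ ((b / (ℓ:ℝ)^n : ℝ) : UnitAddCircle)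
        = (σ ((a / (ℓ:ℝ)^(n+1) : ℝ) : UnitAddCircle) - σ ((b / (ℓ:ℝ)^(n+1) : ℝ) : UnitAddCircle))
          + (ρ ((a / (ℓ:ℝ)^(n+1) : ℝ) : UnitAddCircle) - ρ ((b / (ℓ:ℝ)^(n+1) : ℝ) : UnitAddCircle)) := by
      rw [hσ, hσ, hsmul n, hsmulb n]; ring
    rw [hg]
    calc |ρ ((a / (ℓ:ℝ)^n : ℝ) : UnitAddCircle) - ρ ((b / (ℓ:ℝ)^n : ℝ) : UnitAddCircle)|
        ≤ |σ ((a / (ℓ:ℝ)^(n+1) : ℝ) : UnitAddCircle) - σ ((b / (ℓ:ℝ)^(n+1) : ℝ) : UnitAddCircle)|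
          + g (n+1) := by rw [h1]; exact abs_add_le _ _
      _ ≤ K * (d / (ℓ:ℝ)^(n+1)) + g (n+1) := by
          gcongr
          exact (hσL _ _).trans (by gcongr; exact hdist (n+1))
  have main : ∀ N : ℕ, g 0 ≤ K * d * (∑ n ∈ Finset.range N, ((ℓ:ℝ)⁻¹)^(n+1)) + g N := by
    intro N
    induction N with
    | zero => simp
    | succ N ih =>
      refine ih.trans ?_
      rw [Finset.sum_range_succ]
      have hKd : K * (d / (ℓ:ℝ)^(N+1)) = K * d * ((ℓ:ℝ)⁻¹)^(N+1) := by
        rw [div_eq_mul_inv, inv_pow, mul_assoc]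
      nlinarith [step N]
  have hSle : ∀ N : ℕ, (∑ n ∈ Finset.range N, ((ℓ:ℝ)⁻¹)^(n+1)) ≤ 1 := by
    intro N
    calc (∑ n ∈ Finset.range N, ((ℓ:ℝ)⁻¹)^(n+1))
        ≤ ∑ n ∈ Finset.range N, ((2:ℝ)⁻¹)^(n+1) := by
          apply Finset.sum_le_sum
          intro i _
          apply pow_le_pow_left₀ (by positivity)
          rw [inv_le_inv₀ hℓ0 two_pos]
          exact hℓR
      _ = (2:ℝ)⁻¹ * ∑ n ∈ Finset.range N, ((2:ℝ)⁻¹)^n := by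
          rw [Finset.mul_sum]; congr 1; ext n; ring
      _ ≤ (2:ℝ)⁻¹ * 2 := by
          gcongr
          simpa [one_div] using sum_geometric_two_le N
      _ = 1 := by norm_num
  have bound : ∀ N : ℕ, g 0 ≤ K * d + |Kρ| * d * ((ℓ:ℝ)⁻¹)^N := by
    intro N
    refine (main N).trans (add_le_add ?_ ?_)
    · exact mul_le_of_le_one_right (mul_nonneg hK0 hd0) (hSle N)
    · have h1 : g N ≤ |Kρ| * (d / (ℓ:ℝ)^N) :=
        (hρL' _ _).trans (mul_le_mul_of_nonneg_left (hdist N) (abs_nonneg Kρ))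
      refine h1.trans (le_of_eq ?_)
      rw [div_eq_mul_inv, inv_pow, mul_assoc]
  have hlim : Filter.Tendsto (fun N : ℕ => K * d + |Kρ| * d * ((ℓ:ℝ)⁻¹)^N)
      Filter.atTop (nhds (K * d)) := by
    have h1 : Filter.Tendsto (fun N : ℕ => ((ℓ:ℝ)⁻¹)^N) Filter.atTop (nhds 0) := by
      apply tendsto_pow_atTop_nhds_zero_of_lt_one (by positivity)
      rw [inv_lt_one_iff₀]; right; linarith
    have := (h1.const_mul (|Kρ| * d)).const_add (K * d)
    simpa [mul_assoc] using this
  have hfin : g 0 ≤ K * d := ge_of_tendsto' hlim bound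
  have hg0 : g 0 = |ρ ((a : ℝ) : UnitAddCircle) - ρ ((b : ℝ) : UnitAddCircle)| := by
    simp [hg]
  rw [hg0] at hfin
  rw [← hab]
  exact hfin

end Stmt13Aux


open Stmt13Aux in
theorem stmt13 (ℓ : ℕ) (hℓ : 2 ≤ ℓ) (τ : UnitAddCircle → ℝ) (L : ℝ)
    (hτL : ∀ x y : UnitAddCircle, |τ x - τ y| ≤ L * dist x y)
    (hnc : ∃ x y, τ x ≠ τ y) (hint : ∫ θ : UnitAddCircle, τ θ = 0)
    (k : ℕ) (hk : 0 < k) (hkd : ¬ ℓ ∣ k) (p : ℕ)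
    (hzero : ∀ j < p, fourierCoeff (fun θ : UnitAddCircle => (τ θ : ℂ)) ((ℓ : ℤ) ^ j * k) = 0)
    (hpnz : fourierCoeff (fun θ : UnitAddCircle => (τ θ : ℂ)) ((ℓ : ℤ) ^ p * k) ≠ 0)
    (m : ℕ) (μ : UnitAddCircle → ℝ)
    (hμ : ∃ K : ℝ, ∀ x y : UnitAddCircle, |μ x - μ y| ≤ K * dist x y)
    (hiter : ((fun ρ : UnitAddCircle → ℝ => fun θ => ρ ((ℓ : ℤ) • θ) - ρ θ)^[m]) μ = τ) :
    (m : ℝ) ≤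
      (L + 4 * k * (ℓ : ℝ) ^ (p + 1) *
        ‖fourierCoeff (fun θ : UnitAddCircle => (τ θ : ℂ)) ((ℓ : ℤ) ^ (p + 1) * k)‖) /
      (4 * k * (ℓ : ℝ) ^ (p + 1) *
        ‖fourierCoeff (fun θ : UnitAddCircle => (τ θ : ℂ)) ((ℓ : ℤ) ^ p * k)‖) := by
  have hℓZ : ((ℓ:ℤ)) ≠ 0 := by positivity
  have hkZ : ¬ (ℓ : ℤ) ∣ (k : ℤ) := by exact_mod_cast hkd
  -- L is positive
  have hL0 : 0 < L := by
    obtain ⟨x, y, hxy⟩ := hnc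
    have h1 := hτL x y
    have h2 : 0 < |τ x - τ y| := abs_pos.mpr (sub_ne_zero.mpr hxy)
    nlinarith [dist_nonneg (x := x) (y := y), abs_pos.mpr (sub_ne_zero.mpr hxy)]
  set T : (UnitAddCircle → ℝ) → (UnitAddCircle → ℝ) :=
    fun ρ : UnitAddCircle → ℝ => fun θ => ρ ((ℓ : ℤ) • θ) - ρ θ with hT
  set ν : ℕ → UnitAddCircle → ℝ := fun i => T^[i] μ with hν
  have hνm : ν m = τ := hiter
  have hνsucc : ∀ i, ν (i+1) = fun θ => ν i ((ℓ:ℤ) • θ) - ν i θ := by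
    intro i
    show T^[i+1] μ = _
    rw [Function.iterate_succ_apply' T i μ]
  -- each ν i is Lipschitz
  have hLip : ∀ i, ∃ K : ℝ, 0 ≤ K ∧ ∀ x y : UnitAddCircle, |ν i x - ν i y| ≤ K * dist x y := by
    intro i
    induction i with
    | zero =>
      obtain ⟨K, hK⟩ := hμ
      exact ⟨|K|, abs_nonneg K, fun x y => (hK x y).trans
        (mul_le_mul_of_nonneg_right (le_abs_self K) dist_nonneg)⟩
    | succ i ih =>
      obtain ⟨K, hK0, hK⟩ := ih
      refine ⟨K * (ℓ + 1), by positivity, fun x y => ?_⟩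
      rw [hνsucc i]
      have hdsm : dist ((ℓ:ℤ) • x) ((ℓ:ℤ) • y) ≤ (ℓ:ℝ) * dist x y := by
        rw [dist_eq_norm, dist_eq_norm, ← smul_sub]
        refine (norm_zsmul_le _ _).trans (le_of_eq ?_)
        congr 1
        simp [Int.norm_eq_abs]
      calc |(ν i ((ℓ:ℤ) • x) - ν i x) - (ν i ((ℓ:ℤ) • y) - ν i y)|
          = |(ν i ((ℓ:ℤ) • x) - ν i ((ℓ:ℤ) • y)) + (-(ν i x - ν i y))| := by ring_nf
        _ ≤ |ν i ((ℓ:ℤ) • x) - ν i ((ℓ:ℤ) • y)| + |ν i x - ν i y| := by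
            refine (abs_add_le _ _).trans ?_
            rw [abs_neg]
        _ ≤ K * ((ℓ:ℝ) * dist x y) + K * dist x y :=
            add_le_add ((hK _ _).trans (mul_le_mul_of_nonneg_left hdsm hK0)) (hK x y)
        _ = K * (ℓ + 1) * dist x y := by ring
  have hcont : ∀ i, Continuous (ν i) := fun i => by
    obtain ⟨K, _, hK⟩ := hLip i
    exact lip_cont hK
  -- downward: μ is L-Lipschitz
  have hdown : ∀ t, t ≤ m → ∀ x y : UnitAddCircle, |ν (m - t) x - ν (m - t) y| ≤ L * dist x y := by
    intro t
    induction t with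
    | zero => intro _; simpa [hνm] using hτL
    | succ t ih =>
      intro ht x y
      have h1 : m - t = (m - (t+1)) + 1 := by omega
      have h2 := ih (by omega)
      rw [h1] at h2
      obtain ⟨K, hK0, hK⟩ := hLip (m - (t+1))
      exact lip_down ℓ hℓ (ν (m - (t+1))) (ν ((m - (t+1)) + 1))
        (fun θ => by rw [hνsucc (m - (t+1))]) K L hL0.le hK h2 x y
  have hμL : ∀ x y : UnitAddCircle, |μ x - μ y| ≤ L * dist x y := by
    have := hdown m le_rfl
    simpa [hν] using this
  -- Fourier machinery
  have hcontC : ∀ i, Continuous fun θ : UnitAddCircle => ((ν i θ : ℝ) : ℂ) :=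
    fun i => Complex.continuous_ofReal.comp (hcont i)
  set F : ℕ → ℤ → ℂ := fun i q => fourierCoeff (fun θ : UnitAddCircle => ((ν i θ : ℝ) : ℂ)) q
    with hF
  have hFfun : ∀ i, (fun θ : UnitAddCircle => ((ν (i+1) θ : ℝ) : ℂ))
      = fun θ : UnitAddCircle => (fun x => ((ν i x : ℝ) : ℂ)) ((ℓ:ℤ) • θ) - ((ν i θ : ℝ) : ℂ) := by
    intro i
    funext θ
    rw [hνsucc i]
    push_cast
    rfl
  have hcompC : ∀ i, Continuous (fun θ : UnitAddCircle => ((ν i ((ℓ:ℤ) • θ) : ℝ) : ℂ)) :=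
    fun i => (hcontC i).comp (continuous_zsmul (ℓ:ℤ))
  have hFrec0 : ∀ i (q : ℤ), ¬ (ℓ:ℤ) ∣ q → F (i+1) q = - F i q := by
    intro i q hq
    show fourierCoeff _ q = _
    rw [hFfun i, fourierCoeff_sub' (hcompC i) (hcontC i),
      comp_coeff_zero (fun x => ((ν i x : ℝ) : ℂ)) ℓ hℓ q hq, zero_sub]
  have hFrecs : ∀ i (n : ℤ), F (i+1) ((ℓ:ℤ) * n) = F i n - F i ((ℓ:ℤ) * n) := by
    intro i n
    show fourierCoeff _ _ = _
    rw [hFfun i, fourierCoeff_sub' (hcompC i) (hcontC i),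
      comp_coeff (fun x => ((ν i x : ℝ) : ℂ)) (hcontC i) (ℓ:ℤ) hℓZ n]
  set Tp : ℂ := fourierCoeff (fun θ : UnitAddCircle => (τ θ : ℂ)) ((ℓ : ℤ) ^ p * k) with hTp
  set Tp1 : ℂ := fourierCoeff (fun θ : UnitAddCircle => (τ θ : ℂ)) ((ℓ : ℤ) ^ (p+1) * k) with hTp1
  have hFm : ∀ q : ℤ, F m q = fourierCoeff (fun θ : UnitAddCircle => (τ θ : ℂ)) q := by
    intro q
    show fourierCoeff (fun θ : UnitAddCircle => ((ν m θ : ℝ) : ℂ)) q = _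
    rw [hνm]
  have claim : ∀ t, t ≤ m →
      (∀ j, j < p → F (m - t) ((ℓ:ℤ)^j * k) = 0) ∧
      F (m - t) ((ℓ:ℤ)^p * k) = (-1:ℂ)^t * Tp ∧
      F (m - t) ((ℓ:ℤ)^(p+1) * k) = (-1:ℂ)^t * (Tp1 + (t:ℂ) * Tp) := by
    intro t
    induction t with
    | zero =>
      intro _
      refine ⟨fun j hj => ?_, ?_, ?_⟩
      · rw [Nat.sub_zero, hFm]; exact hzero j hj
      · rw [Nat.sub_zero, hFm, ← hTp]; ring
      · rw [Nat.sub_zero, hFm, ← hTp1]; push_cast; ring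
    | succ t ih =>
      intro ht
      obtain ⟨H1, H2, H3⟩ := ih (by omega)
      have hmt : m - t = (m - (t+1)) + 1 := by omega
      rw [hmt] at H1 H2 H3
      set i := m - (t+1) with hi
      have G1 : ∀ j, j < p → F i ((ℓ:ℤ)^j * k) = 0 := by
        intro j
        induction j with
        | zero =>
          intro hj
          have h := hFrec0 i ((ℓ:ℤ)^0 * k) (by simpa using hkZ)
          rw [H1 0 hj] at h
          linear_combination h
        | succ j ihj =>
          intro hj
          have e : ((ℓ:ℤ)^(j+1) * k) = (ℓ:ℤ) * ((ℓ:ℤ)^j * k) := by ring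
          have h := hFrecs i ((ℓ:ℤ)^j * k)
          rw [← e] at h
          rw [H1 (j+1) hj, ihj (by omega)] at h
          linear_combination h
      have G2 : F i ((ℓ:ℤ)^p * k) = (-1:ℂ)^(t+1) * Tp := by
        cases p with
        | zero =>
          have h := hFrec0 i ((ℓ:ℤ)^0 * k) (by simpa using hkZ)
          rw [H2] at h
          linear_combination h
        | succ p' =>
          have e : ((ℓ:ℤ)^(p'+1) * k) = (ℓ:ℤ) * ((ℓ:ℤ)^p' * k) := by ring
          have h := hFrecs i ((ℓ:ℤ)^p' * k)
          rw [← e] at h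
          rw [H2, G1 p' (by omega)] at h
          linear_combination h
      have G3 : F i ((ℓ:ℤ)^(p+1) * k) = (-1:ℂ)^(t+1) * (Tp1 + ((t+1 : ℕ) : ℂ) * Tp) := by
        have e : ((ℓ:ℤ)^(p+1) * k) = (ℓ:ℤ) * ((ℓ:ℤ)^p * k) := by ring
        have h := hFrecs i ((ℓ:ℤ)^p * k)
        rw [← e] at h
        push_cast
        linear_combination h + G2 - H3
      exact ⟨G1, G2, G3⟩
  obtain ⟨-, -, hfinal⟩ := claim m le_rfl
  rw [Nat.sub_self] at hfinal
  -- F 0 is the Fourier coefficient of μ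
  have hF0 : F 0 ((ℓ:ℤ)^(p+1) * k)
      = fourierCoeff (fun θ : UnitAddCircle => (μ θ : ℂ)) ((ℓ:ℤ)^(p+1) * k) := by
    rw [hF]
    congr 1
  rw [hF0] at hfinal
  -- decay bound
  have hq0 : ((ℓ:ℤ)^(p+1) * k) ≠ 0 := by
    have : (0:ℤ) < (ℓ:ℤ)^(p+1) * k :=
      mul_pos (pow_pos (by exact_mod_cast (by omega : 0 < ℓ)) _) (by exact_mod_cast hk)
    omega
  have hdec := decay μ L hL0.le hμL ((ℓ:ℤ)^(p+1) * k) hq0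
  have habs : |(((ℓ:ℤ)^(p+1) * k : ℤ) : ℝ)| = (ℓ:ℝ)^(p+1) * k := by
    rw [abs_of_pos]
    · push_cast; ring
    · push_cast
      positivity
  rw [habs] at hdec
  have hk' : (0:ℝ) < k := by exact_mod_cast hk
  have hℓ' : (0:ℝ) < (ℓ:ℝ) := by exact_mod_cast (by omega : 0 < ℓ)
  have hTpn : 0 < ‖Tp‖ := norm_pos_iff.mpr hpnz
  have hnF : ‖fourierCoeff (fun θ : UnitAddCircle => (μ θ : ℂ)) ((ℓ:ℤ)^(p+1) * k)‖
      = ‖Tp1 + (m:ℂ) * Tp‖ := by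
    rw [hfinal, norm_mul, norm_pow, norm_neg, norm_one, one_pow, one_mul]
  have hmn : (m:ℝ) * ‖Tp‖ ≤ L / (4 * ((ℓ:ℝ)^(p+1) * k)) + ‖Tp1‖ := by
    have h1 : (m:ℝ) * ‖Tp‖ = ‖(Tp1 + (m:ℂ)*Tp) - Tp1‖ := by
      rw [show (Tp1 + (m:ℂ)*Tp) - Tp1 = (m:ℂ)*Tp by ring, norm_mul, Complex.norm_natCast]
    rw [h1]
    refine (norm_sub_le _ _).trans ?_
    rw [← hnF]
    exact add_le_add hdec le_rfl
  have hD : (0:ℝ) < 4 * k * (ℓ:ℝ)^(p+1) * ‖Tp‖ :=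
    mul_pos (mul_pos (mul_pos four_pos hk') (pow_pos hℓ' _)) hTpn
  have hA : (0:ℝ) < 4 * ((ℓ:ℝ)^(p+1) * k) := by positivity
  rw [le_div_iff₀ hD]
  calc (m:ℝ) * (4 * k * (ℓ:ℝ)^(p+1) * ‖Tp‖)
      = ((m:ℝ) * ‖Tp‖) * (4 * ((ℓ:ℝ)^(p+1) * k)) := by ring
    _ ≤ (L / (4 * ((ℓ:ℝ)^(p+1) * k)) + ‖Tp1‖) * (4 * ((ℓ:ℝ)^(p+1) * k)) :=
        mul_le_mul_of_nonneg_right hmn hA.le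
    _ = L + 4 * k * (ℓ:ℝ)^(p+1) * ‖Tp1‖ := by
        field_simp
end

section
/- Let V̄ = ℝ × [-T₀,T₀] and F̃(s,t) = (f̃(s,t), g̃(s,t)) : V̄ → ℝ² satisfying: f̃(s₀,t) - f̃(s₁,t) ≥ ℓ₀(s₀-s₁) for s₀ > s₁; |g̃(s₀,t) - g̃(s₁,t)| ≤ C₂₁|s₀-s₁|; |f̃(s,t₀) - f̃(s,t₁)| ≤ C₁₂|t₀-t₁|; |g̃(s,t₀) - g̃(s,t₁)| ≤ λ₀|t₀-t₁|, with ℓ₀, λ₀, C₁₂, C₂₁ > 0. If ρ̃ : ℝ → [-T₀,T₀] is Lipschitz with ‖ρ̃‖_L < ℓ₀/C₁₂, then the image under F̃ of the graph of ρ̃ is the graph of a Lipschitz function with Lipschitz constant at most (C₂₁ + λ₀‖ρ̃‖_L)/(ℓ₀ - C₁₂‖ρ̃‖_L). -/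
theorem stmt18 (T₀ ℓ₀ lam₀ C12 C21 : ℝ)
    (hT₀ : 0 < T₀) (hℓ₀ : 0 < ℓ₀) (hlam₀ : 0 < lam₀) (hC12 : 0 < C12) (hC21 : 0 < C21)
    (f g : ℝ → ℝ → ℝ)
    (hf1 : ∀ s₀ s₁ t : ℝ, t ∈ Set.Icc (-T₀) T₀ → s₁ < s₀ →
      ℓ₀ * (s₀ - s₁) ≤ f s₀ t - f s₁ t)
    (hg1 : ∀ s₀ s₁ t : ℝ, t ∈ Set.Icc (-T₀) T₀ →
      |g s₀ t - g s₁ t| ≤ C21 * |s₀ - s₁|)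
    (hf2 : ∀ s t₀ t₁ : ℝ, t₀ ∈ Set.Icc (-T₀) T₀ → t₁ ∈ Set.Icc (-T₀) T₀ →
      |f s t₀ - f s t₁| ≤ C12 * |t₀ - t₁|)
    (hg2 : ∀ s t₀ t₁ : ℝ, t₀ ∈ Set.Icc (-T₀) T₀ → t₁ ∈ Set.Icc (-T₀) T₀ →
      |g s t₀ - g s t₁| ≤ lam₀ * |t₀ - t₁|)
    (ρ : ℝ → ℝ) (hρmem : ∀ s, ρ s ∈ Set.Icc (-T₀) T₀)
    (K : ℝ) (hρK : ∀ s s' : ℝ, |ρ s - ρ s'| ≤ K * |s - s'|) (hK : K < ℓ₀ / C12) :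
    ∃ φ : ℝ → ℝ,
      (∀ x y : ℝ, |φ x - φ y| ≤ ((C21 + lam₀ * K) / (ℓ₀ - C12 * K)) * |x - y|) ∧
      ∀ s : ℝ, φ (f s (ρ s)) = g s (ρ s) := by
  set u : ℝ → ℝ := fun s => f s (ρ s) with hu
  set v : ℝ → ℝ := fun s => g s (ρ s) with hv
  have hK0 : 0 ≤ K := by
    by_contra h
    push_neg at h
    have h1 := hρK 0 1
    have : |(0:ℝ) - 1| = 1 := by norm_num
    rw [this, mul_one] at h1
    have := abs_nonneg (ρ 0 - ρ 1)
    linarith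
  have hden : 0 < ℓ₀ - C12 * K := by
    have := (lt_div_iff₀ hC12).mp hK
    nlinarith
  -- key lower bound on u
  have key1 : ∀ s₀ s₁ : ℝ, s₁ < s₀ → (ℓ₀ - C12 * K) * (s₀ - s₁) ≤ u s₀ - u s₁ := by
    intro s₀ s₁ hlt
    have h1 := hf1 s₀ s₁ (ρ s₀) (hρmem s₀) hlt
    have h2 := hf2 s₁ (ρ s₀) (ρ s₁) (hρmem s₀) (hρmem s₁)
    have h3 := hρK s₀ s₁
    have habs : |s₀ - s₁| = s₀ - s₁ := abs_of_pos (by linarith)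
    rw [habs] at h3
    have h2' : f s₁ (ρ s₀) - f s₁ (ρ s₁) ≥ -(C12 * (K * (s₀ - s₁))) := by
      have := neg_abs_le (f s₁ (ρ s₀) - f s₁ (ρ s₁))
      have hmul : C12 * |ρ s₀ - ρ s₁| ≤ C12 * (K * (s₀ - s₁)) :=
        mul_le_mul_of_nonneg_left h3 hC12.le
      linarith
    have : u s₀ - u s₁ = (f s₀ (ρ s₀) - f s₁ (ρ s₀)) + (f s₁ (ρ s₀) - f s₁ (ρ s₁)) := by
      simp [hu]
    rw [this]
    nlinarith
  have key1' : ∀ s₀ s₁ : ℝ, (ℓ₀ - C12 * K) * |s₀ - s₁| ≤ |u s₀ - u s₁| := by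
    intro s₀ s₁
    rcases lt_trichotomy s₁ s₀ with h | h | h
    · have := key1 s₀ s₁ h
      rw [abs_of_pos (show (0:ℝ) < s₀ - s₁ by linarith)]
      calc (ℓ₀ - C12 * K) * (s₀ - s₁) ≤ u s₀ - u s₁ := this
        _ ≤ |u s₀ - u s₁| := le_abs_self _
    · simp [h]
    · have := key1 s₁ s₀ h
      rw [abs_sub_comm s₀ s₁, abs_of_pos (show (0:ℝ) < s₁ - s₀ by linarith),
        abs_sub_comm (u s₀) (u s₁)]
      calc (ℓ₀ - C12 * K) * (s₁ - s₀) ≤ u s₁ - u s₀ := this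
        _ ≤ |u s₁ - u s₀| := le_abs_self _
  have key2 : ∀ s₀ s₁ : ℝ, |v s₀ - v s₁| ≤ (C21 + lam₀ * K) * |s₀ - s₁| := by
    intro s₀ s₁
    have h1 := hg1 s₀ s₁ (ρ s₀) (hρmem s₀)
    have h2 := hg2 s₁ (ρ s₀) (ρ s₁) (hρmem s₀) (hρmem s₁)
    have h3 := hρK s₀ s₁
    have hmul : lam₀ * |ρ s₀ - ρ s₁| ≤ lam₀ * (K * |s₀ - s₁|) :=
      mul_le_mul_of_nonneg_left h3 hlam₀.le
    calc |v s₀ - v s₁| = |(g s₀ (ρ s₀) - g s₁ (ρ s₀)) + (g s₁ (ρ s₀) - g s₁ (ρ s₁))| := by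
          simp [hv]
      _ ≤ |g s₀ (ρ s₀) - g s₁ (ρ s₀)| + |g s₁ (ρ s₀) - g s₁ (ρ s₁)| := abs_add_le _ _
      _ ≤ C21 * |s₀ - s₁| + lam₀ * (K * |s₀ - s₁|) := by linarith
      _ = (C21 + lam₀ * K) * |s₀ - s₁| := by ring
  have huinj : Function.Injective u := by
    intro a b hab
    by_contra hne
    have h := key1' a b
    rw [hab, sub_self, abs_zero] at h
    have : 0 < |a - b| := abs_pos.mpr (sub_ne_zero.mpr hne)
    nlinarith
  set L : ℝ := (C21 + lam₀ * K) / (ℓ₀ - C12 * K) with hL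
  have hL0 : 0 ≤ L := div_nonneg (by positivity) hden.le
  set w : ℝ → ℝ := fun x => v (Function.invFun u x) with hw
  have hwlip : LipschitzOnWith L.toNNReal w (Set.range u) := by
    apply LipschitzOnWith.of_dist_le_mul
    rintro x ⟨s₀, rfl⟩ y ⟨s₁, rfl⟩
    have hx : Function.invFun u (u s₀) = s₀ := Function.leftInverse_invFun huinj s₀
    have hy : Function.invFun u (u s₁) = s₁ := Function.leftInverse_invFun huinj s₁
    simp only [hw, hx, hy, Real.dist_eq]
    rw [Real.coe_toNNReal _ hL0]
    have h2 := key2 s₀ s₁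
    have h1 := key1' s₀ s₁
    calc |v s₀ - v s₁| ≤ (C21 + lam₀ * K) * |s₀ - s₁| := h2
      _ = L * ((ℓ₀ - C12 * K) * |s₀ - s₁|) := by rw [hL, ← mul_assoc, div_mul_cancel₀ _ hden.ne']
      _ ≤ L * |u s₀ - u s₁| := by
          apply mul_le_mul_of_nonneg_left h1 hL0
  obtain ⟨φ, hφlip, hφeq⟩ := hwlip.extend_real
  refine ⟨φ, ?_, ?_⟩
  · intro x y
    have := hφlip.dist_le_mul x y
    rwa [Real.dist_eq, Real.dist_eq, Real.coe_toNNReal _ hL0] at this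
  · intro s
    have h1 : φ (u s) = w (u s) := (hφeq ⟨s, rfl⟩).symm
    have h2 : Function.invFun u (u s) = s := Function.leftInverse_invFun huinj s
    rw [show f s (ρ s) = u s from rfl, h1]
    simp [hw, h2, hv]
end
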